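/- (Encoder perturbation bound) Let σ: ℝ → ℝ be C-Lipschitz. Suppose |u(x_i) − u(x_j)| ≤ δ whenever i ∈ M_o and j ∈ M_n with i ← j or i → j. Define the original encoder output e_i = σ( Σ_{j∈M_o} W^e_{i j} u(x_j) + b^e_i ) and the transformed encoder output ẽ_i = σ( Σ_{k∈M_n} W̃^e_{i k} u(x_k) + b^e_i ), where W̃^e_{i k} = Σ_{m ∈ M_o : m ↮ k} W^e_{i m} / |{h ∈ M_n : m ↮ h}|. Then for every output index i, |e_i − ẽ_i| ≤ δ C Σ_{j∈M_o} |W^e_{i j}|. -/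

import Mathlib

open Finset
open scoped Classical

/-- `k` is the unique nearest neighbour of `x` among the points of the mesh `M`. -/
def IsNN {X : Type*} [MetricSpace X] (M : Finset X) (x k : X) : Prop :=
  k ∈ M ∧ ∀ m ∈ M, m ≠ k → dist x k < dist x m

/-- Encoder perturbation bound: with a C-Lipschitz activation and nearest-neighbour
solution values within `δ`, the original and GFN-transformed encoder outputs differ
by at most `δ C Σ_j |We i j|` in each component. -/
theorem gfn_encoder_perturbation_bound {X : Type*} [MetricSpace X] (Mo Mn : Finset X)
    (nnO nnN : X → X)
    (hO : ∀ j ∈ Mn, IsNN Mo j (nnO j))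
    (hN : ∀ i ∈ Mo, IsNN Mn i (nnN i))
    {L : ℕ} (We : Fin L → X → ℝ) (be : Fin L → ℝ)
    (σ : ℝ → ℝ) (C : ℝ) (hC : 0 ≤ C)
    (hLip : ∀ a b, |σ a - σ b| ≤ C * |a - b|)
    (u : X → ℝ) (δ : ℝ) (hδ : 0 ≤ δ)
    (hcross : ∀ i ∈ Mo, ∀ j ∈ Mn, (nnO j = i ∨ nnN i = j) → |u i - u j| ≤ δ) :
    ∀ i : Fin L,
      |σ (∑ j ∈ Mo, We i j * u j + be i) -
        σ (∑ k ∈ Mn,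
            (∑ m ∈ Mo.filter (fun m => nnO k = m ∨ nnN m = k),
              We i m / ((Mn.filter (fun h => nnO h = m ∨ nnN m = h)).card : ℝ)) * u k
          + be i)| ≤ δ * C * ∑ j ∈ Mo, |We i j| := by
  intro i
  set S : X → Finset X := fun m => Mn.filter (fun h => nnO h = m ∨ nnN m = h) with hS
  have hScard : ∀ m ∈ Mo, 0 < (S m).card := by
    intro m hm
    exact card_pos.mpr ⟨nnN m, mem_filter.mpr ⟨(hN m hm).1, Or.inr rfl⟩⟩
  -- rewrite the transformed sum by swapping the order of summation
  have key : (∑ k ∈ Mn, (∑ m ∈ Mo.filter (fun m => nnO k = m ∨ nnN m = k),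
        We i m / ((Mn.filter (fun h => nnO h = m ∨ nnN m = h)).card : ℝ)) * u k)
      = ∑ m ∈ Mo, (We i m / ((S m).card : ℝ)) * ∑ k ∈ S m, u k := by
    calc ∑ k ∈ Mn, (∑ m ∈ Mo.filter (fun m => nnO k = m ∨ nnN m = k),
            We i m / ((Mn.filter (fun h => nnO h = m ∨ nnN m = h)).card : ℝ)) * u k
        = ∑ k ∈ Mn, ∑ m ∈ Mo, (if nnO k = m ∨ nnN m = k then
            (We i m / ((S m).card : ℝ)) * u k else 0) := by
          refine Finset.sum_congr rfl fun k _ => ?_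
          rw [sum_mul, sum_filter]
      _ = ∑ m ∈ Mo, ∑ k ∈ Mn, (if nnO k = m ∨ nnN m = k then
            (We i m / ((S m).card : ℝ)) * u k else 0) := Finset.sum_comm
      _ = ∑ m ∈ Mo, (We i m / ((S m).card : ℝ)) * ∑ k ∈ S m, u k := by
          refine Finset.sum_congr rfl fun m _ => ?_
          rw [← sum_filter, mul_sum]
  rw [key]
  have hdiff : (∑ j ∈ Mo, We i j * u j + be i) -
      ((∑ m ∈ Mo, (We i m / ((S m).card : ℝ)) * ∑ k ∈ S m, u k) + be i)
      = ∑ m ∈ Mo, (We i m / ((S m).card : ℝ)) * ∑ k ∈ S m, (u m - u k) := by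
    rw [add_sub_add_right_eq_sub, ← Finset.sum_sub_distrib]
    refine Finset.sum_congr rfl fun m hm => ?_
    have hc : ((S m).card : ℝ) ≠ 0 := by
      exact_mod_cast (hScard m hm).ne'
    simp_rw [Finset.sum_sub_distrib, Finset.sum_const, mul_sub, nsmul_eq_mul]
    congr 1
    field_simp
  calc |σ (∑ j ∈ Mo, We i j * u j + be i) -
        σ ((∑ m ∈ Mo, (We i m / ((S m).card : ℝ)) * ∑ k ∈ S m, u k) + be i)|
      ≤ C * |(∑ j ∈ Mo, We i j * u j + be i) -
        ((∑ m ∈ Mo, (We i m / ((S m).card : ℝ)) * ∑ k ∈ S m, u k) + be i)| := hLip _ _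
    _ ≤ C * (δ * ∑ j ∈ Mo, |We i j|) := by
        refine mul_le_mul_of_nonneg_left ?_ hC
        rw [hdiff]
        refine (Finset.abs_sum_le_sum_abs _ _).trans ?_
        rw [Finset.mul_sum]
        refine Finset.sum_le_sum fun m hm => ?_
        have hc0 : 0 < ((S m).card : ℝ) := by exact_mod_cast hScard m hm
        rw [abs_mul, abs_div, abs_of_nonneg (le_of_lt hc0)]
        have h1 : |∑ k ∈ S m, (u m - u k)| ≤ ((S m).card : ℝ) * δ := by
          refine (Finset.abs_sum_le_sum_abs _ _).trans ?_
          calc ∑ k ∈ S m, |u m - u k| ≤ ∑ _k ∈ S m, δ := by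
                refine Finset.sum_le_sum fun k hk => ?_
                simp only [hS, mem_filter] at hk
                exact hcross m hm k hk.1 hk.2
            _ = ((S m).card : ℝ) * δ := by rw [sum_const, nsmul_eq_mul]
        calc |We i m| / ((S m).card : ℝ) * |∑ k ∈ S m, (u m - u k)|
            ≤ |We i m| / ((S m).card : ℝ) * (((S m).card : ℝ) * δ) := by
              exact mul_le_mul_of_nonneg_left h1 (by positivity)
          _ = δ * |We i m| := by field_simp
    _ = δ * C * ∑ j ∈ Mo, |We i j| := by ring
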